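/- Consider the action of B_n = C_2 ≀ S_n on T_n. Every flat F of T_n with e_* ∈ F and rank k+1 lies in the B_n-orbit of F_k^{II} = {e_*} ∪ {a_1, b_1, ..., a_k, b_k}, and the stabilizer of F_k^{II} in B_n is isomorphic to B_k × B_{n−k}. -/

import Mathlib

open Pointwise

inductive TnEdge (n : ℕ) : Type
  | spine : TnEdge n
  | a (i : Fin n) : TnEdge n
  | b (i : Fin n) : TnEdge n
  deriving DecidableEq, Fintype

open TnEdge

def TnIndep (n : ℕ) (S : Set (TnEdge n)) : Prop :=
  (∀ i : Fin n, ¬ ({spine, a i, b i} : Set (TnEdge n)) ⊆ S) ∧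
  (∀ i j : Fin n, i ≠ j → ¬ ({a i, b i, a j, b j} : Set (TnEdge n)) ⊆ S)

/-- The rank of a set in a matroid: the largest size of an independent subset. -/
noncomputable def mRank {α : Type*} (M : Matroid α) (S : Set α) : ℕ :=
  sSup (Set.ncard '' {I | I ⊆ S ∧ M.Indep I})

/-- A permutation of the spikes of the thagomizer matroid. -/
def spikePerm {n : ℕ} (σ : Equiv.Perm (Fin n)) : Equiv.Perm (TnEdge n) where
  toFun e := match e with | spine => spine | a i => a (σ i) | b i => b (σ i)
  invFun e := match e with | spine => spine | a i => a (σ.symm i) | b i => b (σ.symm i)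
  left_inv e := by cases e <;> simp
  right_inv e := by cases e <;> simp

/-- The swap of the two edges of the `i`-th spike. -/
def spikeSwap {n : ℕ} (i : Fin n) : Equiv.Perm (TnEdge n) :=
  Equiv.swap (a i) (b i)

/-- The hyperoctahedral group `B_n`, realized as the group of permutations of the
ground set of `T_n` generated by spike permutations and spike swaps. -/
def BnGroup (n : ℕ) : Subgroup (Equiv.Perm (TnEdge n)) :=
  Subgroup.closure (Set.range (spikePerm (n := n)) ∪ Set.range (spikeSwap (n := n)))

/-- The permutation action of `S_m` on the group `C_2^m`. -/
def permAutHom (m : ℕ) :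
    Equiv.Perm (Fin m) →* MulAut (Fin m → Multiplicative (ZMod 2)) where
  toFun σ := MulEquiv.arrowCongr σ (MulEquiv.refl _)
  map_one' := rfl
  map_mul' _ _ := rfl

/-- The hyperoctahedral group `B_m = C_2 ≀ S_m = C_2^m ⋊ S_m`. -/
def hyperoctahedral (m : ℕ) : Type :=
  SemidirectProduct (Fin m → Multiplicative (ZMod 2)) (Equiv.Perm (Fin m)) (permAutHom m)

noncomputable instance (m : ℕ) : Group (hyperoctahedral m) :=
  inferInstanceAs (Group (SemidirectProduct _ _ _))

/-- The representative flat `F_k^{II} = {e_*} ∪ {a_1, b_1, …, a_k, b_k}`. -/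
def FkII (n k : ℕ) : Set (TnEdge n) :=
  {spine} ∪ {e | ∃ i : Fin n, (i : ℕ) < k ∧ (e = a i ∨ e = b i)}

namespace Thag
open TnEdge Set

variable {n : ℕ}

/-- elements of the pair-set shape -/
def pairSet (S : Set (Fin n)) : Set (TnEdge n) :=
  {spine} ∪ {e | ∃ i ∈ S, e = a i ∨ e = b i}

lemma flat_mem {M : Matroid (TnEdge n)} {F I : Set (TnEdge n)} {x : TnEdge n}
    (hF : M.IsFlat F) (hI : M.Indep I) (hIF : I ⊆ F) (hd : M.Dep (insert x I)) : x ∈ F := by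
  have : x ∈ M.closure I := hI.mem_closure_iff.2 (Or.inl hd)
  have h2 : M.closure I ⊆ M.closure F := M.closure_mono hIF
  rw [hF.closure] at h2
  exact h2 this

variable {M : Matroid (TnEdge n)} (hE : M.E = Set.univ) (hInd : ∀ S, M.Indep S ↔ TnIndep n S)

include hInd in
lemma indep_pair (i : Fin n) : M.Indep {spine, a i} := by
  rw [hInd]
  constructor
  · intro j h
    have : b j ∈ ({spine, a i} : Set (TnEdge n)) := h (by simp)
    simp at this
  · intro j l _ h
    have : b j ∈ ({spine, a i} : Set (TnEdge n)) := h (by simp)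
    simp at this

include hInd in
lemma indep_pair' (i : Fin n) : M.Indep {spine, b i} := by
  rw [hInd]
  constructor
  · intro j h
    have : a j ∈ ({spine, b i} : Set (TnEdge n)) := h (by simp)
    simp at this
  · intro j l _ h
    have : a j ∈ ({spine, b i} : Set (TnEdge n)) := h (by simp)
    simp at this

include hE hInd in
lemma pair_closed {F : Set (TnEdge n)} (hF : M.IsFlat F) (hsp : spine ∈ F) (i : Fin n) :
    (a i ∈ F → b i ∈ F) ∧ (b i ∈ F → a i ∈ F) := by
  constructor
  · intro hai
    refine flat_mem hF (indep_pair hInd i) ?_ ?_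
    · intro x hx; rcases hx with rfl | hx
      · exact hsp
      · rcases hx with rfl; exact hai
    · rw [Matroid.dep_iff]
      refine ⟨?_, by rw [hE]; exact Set.subset_univ _⟩
      rw [hInd]
      rintro ⟨h1, _⟩
      refine h1 i ?_
      intro x hx
      rcases hx with rfl | hx
      · exact Or.inr (Or.inl rfl)
      rcases hx with rfl | hx
      · exact Or.inr (Or.inr rfl)
      rcases hx with rfl
      · exact Or.inl rfl
  · intro hbi
    refine flat_mem hF (indep_pair' hInd i) ?_ ?_
    · intro x hx; rcases hx with rfl | hx
      · exact hsp
      · rcases hx with rfl; exact hbi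
    · rw [Matroid.dep_iff]
      refine ⟨?_, by rw [hE]; exact Set.subset_univ _⟩
      rw [hInd]
      rintro ⟨h1, _⟩
      refine h1 i ?_
      intro x hx
      rcases hx with rfl | hx
      · exact Or.inr (Or.inl rfl)
      rcases hx with rfl | hx
      · exact Or.inl rfl
      rcases hx with rfl
      · exact Or.inr (Or.inr rfl)

include hE hInd in
lemma F_shape {F : Set (TnEdge n)} (hF : M.IsFlat F) (hsp : spine ∈ F) :
    F = pairSet {i | a i ∈ F} := by
  ext x
  constructor
  · intro hx
    cases x with
    | spine => exact Or.inl rfl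
    | a i => exact Or.inr ⟨i, hx, Or.inl rfl⟩
    | b i => exact Or.inr ⟨i, (pair_closed hE hInd hF hsp i).2 hx, Or.inr rfl⟩
  · rintro (rfl | ⟨i, hi, rfl | rfl⟩)
    · exact hsp
    · exact hi
    · exact (pair_closed hE hInd hF hsp i).1 hi


lemma a_mem_pairSet {S : Set (Fin n)} {i : Fin n} (h : a i ∈ pairSet S) : i ∈ S := by
  rcases h with h | ⟨j, hj, h | h⟩
  · exact absurd h (by simp)
  · obtain rfl : i = j := by injection h
    exact hj
  · exact absurd h (by simp)

lemma b_mem_pairSet {S : Set (Fin n)} {i : Fin n} (h : b i ∈ pairSet S) : i ∈ S := by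
  rcases h with h | ⟨j, hj, h | h⟩
  · exact absurd h (by simp)
  · exact absurd h (by simp)
  · obtain rfl : i = j := by injection h
    exact hj

def idx : TnEdge n → Option (Fin n)
  | spine => none
  | a i => some i
  | b i => some i

lemma idx_injOn {J : Set (TnEdge n)} (hkey : ∀ i : Fin n, ¬(a i ∈ J ∧ b i ∈ J)) :
    Set.InjOn idx J := by
  intro x hx y hy hxy
  cases x with
  | spine =>
    cases y with
    | spine => rfl
    | a j => exact absurd hxy (by simp [idx])
    | b j => exact absurd hxy (by simp [idx])
  | a i =>
    cases y with
    | spine => exact absurd hxy (by simp [idx])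
    | a j => simp only [idx, Option.some.injEq] at hxy; rw [hxy]
    | b j =>
      simp only [idx, Option.some.injEq] at hxy; subst hxy
      exact absurd ⟨hx, hy⟩ (hkey i)
  | b i =>
    cases y with
    | spine => exact absurd hxy (by simp [idx])
    | b j => simp only [idx, Option.some.injEq] at hxy; rw [hxy]
    | a j =>
      simp only [idx, Option.some.injEq] at hxy; subst hxy
      exact absurd ⟨hy, hx⟩ (hkey i)

lemma idx_image_subset {S : Set (Fin n)} {J : Set (TnEdge n)} (hJ : J ⊆ pairSet S)
    (hsp : spine ∉ J) : idx '' J ⊆ Option.some '' S := by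
  rintro _ ⟨x, hx, rfl⟩
  cases x with
  | spine => exact absurd hx hsp
  | a i =>
    rcases hJ hx with h | ⟨j, hj, h | h⟩
    · exact absurd h (by simp)
    · rcases a.injEq .. ▸ h with rfl; exact ⟨i, hj, rfl⟩
    · exact absurd h (by simp)
  | b i =>
    rcases hJ hx with h | ⟨j, hj, h | h⟩
    · exact absurd h (by simp)
    · exact absurd h (by simp)
    · rcases b.injEq .. ▸ h with rfl; exact ⟨i, hj, rfl⟩

lemma card_le_of_indep {S : Set (Fin n)} {I : Set (TnEdge n)} (hI : TnIndep n I)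
    (hIF : I ⊆ pairSet S) : I.ncard ≤ S.ncard + 1 := by
  have hSfin : (Option.some '' S).Finite := (S.toFinite.image _)
  have hsomecard : (Option.some '' S).ncard = S.ncard :=
    Set.ncard_image_of_injective _ (Option.some_injective _)
  by_cases hsp : spine ∈ I
  · have hkey : ∀ i : Fin n, ¬(a i ∈ I ∧ b i ∈ I) := by
      rintro i ⟨h1, h2⟩
      refine hI.1 i ?_
      intro z hz
      rcases hz with rfl | hz
      · exact hsp
      rcases hz with rfl | hz
      · exact h1
      rcases hz with rfl
      exact h2
    have himg : idx '' I ⊆ insert none (Option.some '' S) := by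
      rintro _ ⟨x, hx, rfl⟩
      cases x with
      | spine => exact Or.inl rfl
      | a i => exact Or.inr ⟨i, a_mem_pairSet (hIF hx), rfl⟩
      | b i => exact Or.inr ⟨i, b_mem_pairSet (hIF hx), rfl⟩
    calc I.ncard = (idx '' I).ncard := (Set.ncard_image_of_injOn (idx_injOn hkey)).symm
      _ ≤ (insert none (Option.some '' S)).ncard :=
          Set.ncard_le_ncard himg (hSfin.insert _)
      _ ≤ (Option.some '' S).ncard + 1 := Set.ncard_insert_le _ _
      _ = S.ncard + 1 := by rw [hsomecard]
  · by_cases hii : ∃ i : Fin n, a i ∈ I ∧ b i ∈ I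
    · obtain ⟨i₀, hai₀, hbi₀⟩ := hii
      have hkey : ∀ i : Fin n, ¬(a i ∈ I \ {b i₀} ∧ b i ∈ I \ {b i₀}) := by
        rintro i ⟨⟨h1, -⟩, h2, h2'⟩
        have hne : i ≠ i₀ := by
          intro h; exact h2' (by rw [h]; rfl)
        refine hI.2 i i₀ hne ?_
        intro z hz
        rcases hz with rfl | hz
        · exact h1
        rcases hz with rfl | hz
        · exact h2
        rcases hz with rfl | hz
        · exact hai₀
        rcases hz with rfl
        exact hbi₀
      have hsub : I \ {b i₀} ⊆ pairSet S := fun z hz => hIF hz.1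
      have hsp' : spine ∉ I \ {b i₀} := fun h => hsp h.1
      have h1 : (I \ {b i₀}).ncard ≤ S.ncard := by
        calc (I \ {b i₀}).ncard = (idx '' (I \ {b i₀})).ncard :=
              (Set.ncard_image_of_injOn (idx_injOn hkey)).symm
          _ ≤ (Option.some '' S).ncard :=
              Set.ncard_le_ncard (idx_image_subset hsub hsp') hSfin
          _ = S.ncard := hsomecard
      calc I.ncard ≤ (insert (b i₀) (I \ {b i₀})).ncard :=
            Set.ncard_le_ncard (fun z hz => by
              by_cases hzb : z = b i₀
              · exact Or.inl hzb
              · exact Or.inr ⟨hz, hzb⟩) ((I.toFinite.diff).insert _)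
        _ ≤ (I \ {b i₀}).ncard + 1 := Set.ncard_insert_le _ _
        _ ≤ S.ncard + 1 := by omega
    · push_neg at hii
      have hkey : ∀ i : Fin n, ¬(a i ∈ I ∧ b i ∈ I) := by
        rintro i ⟨h1, h2⟩; exact hii i h1 h2
      calc I.ncard = (idx '' I).ncard := (Set.ncard_image_of_injOn (idx_injOn hkey)).symm
        _ ≤ (Option.some '' S).ncard :=
            Set.ncard_le_ncard (idx_image_subset hIF hsp) hSfin
        _ = S.ncard := hsomecard
        _ ≤ S.ncard + 1 := Nat.le_succ _


lemma a_injective : Function.Injective (a : Fin n → TnEdge n) := by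
  intro i j h; injection h

include hInd in
lemma mRank_pairSet (S : Set (Fin n)) : mRank M (pairSet S) = S.ncard + 1 := by
  have hbound : ∀ m ∈ Set.ncard '' {I | I ⊆ pairSet S ∧ M.Indep I}, m ≤ S.ncard + 1 := by
    rintro m ⟨I, ⟨hIF, hI⟩, rfl⟩
    exact card_le_of_indep ((hInd I).1 hI) hIF
  -- the witness independent set
  set I0 : Set (TnEdge n) := insert spine (a '' S) with hI0
  have hI0sub : I0 ⊆ pairSet S := by
    rintro z (rfl | ⟨i, hi, rfl⟩)
    · exact Or.inl rfl
    · exact Or.inr ⟨i, hi, Or.inl rfl⟩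
  have hbnot : ∀ i : Fin n, b i ∉ I0 := by
    rintro i (h | ⟨j, hj, h⟩) <;> exact absurd h (by simp)
  have hI0ind : M.Indep I0 := by
    rw [hInd]
    constructor
    · intro i h
      exact absurd (h (show b i ∈ ({spine, a i, b i} : Set (TnEdge n)) by
        exact Or.inr (Or.inr rfl))) (hbnot i)
    · intro i j _ h
      exact absurd (h (show b i ∈ ({a i, b i, a j, b j} : Set (TnEdge n)) by
        exact Or.inr (Or.inl rfl))) (hbnot i)
  have hI0card : I0.ncard = S.ncard + 1 := by
    rw [hI0, Set.ncard_insert_of_notMem (by rintro ⟨j, hj, h⟩; exact absurd h (by simp))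
      ((S.toFinite.image _)), Set.ncard_image_of_injective _ a_injective]
  apply le_antisymm
  · exact csSup_le ⟨I0.ncard, ⟨I0, ⟨hI0sub, hI0ind⟩, rfl⟩⟩ hbound
  · rw [← hI0card]
    exact le_csSup ⟨S.ncard + 1, hbound⟩ ⟨I0, ⟨hI0sub, hI0ind⟩, rfl⟩

lemma spikePerm_a (σ : Equiv.Perm (Fin n)) (i : Fin n) : spikePerm σ (a i) = a (σ i) := rfl
lemma spikePerm_b (σ : Equiv.Perm (Fin n)) (i : Fin n) : spikePerm σ (b i) = b (σ i) := rfl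
lemma spikePerm_spine (σ : Equiv.Perm (Fin n)) : spikePerm σ spine = spine := rfl

lemma spikePerm_image_pairSet (σ : Equiv.Perm (Fin n)) (S : Set (Fin n)) :
    ⇑(spikePerm σ) '' pairSet S = pairSet (σ '' S) := by
  ext y
  constructor
  · rintro ⟨x, hx, rfl⟩
    rcases hx with rfl | ⟨i, hi, rfl | rfl⟩
    · exact Or.inl rfl
    · exact Or.inr ⟨σ i, ⟨i, hi, rfl⟩, Or.inl rfl⟩
    · exact Or.inr ⟨σ i, ⟨i, hi, rfl⟩, Or.inr rfl⟩
  · rintro (rfl | ⟨j, ⟨i, hi, rfl⟩, rfl | rfl⟩)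
    · exact ⟨spine, Or.inl rfl, rfl⟩
    · exact ⟨a i, Or.inr ⟨i, hi, Or.inl rfl⟩, rfl⟩
    · exact ⟨b i, Or.inr ⟨i, hi, Or.inr rfl⟩, rfl⟩

lemma FkII_eq_pairSet (k : ℕ) : FkII n k = pairSet {i : Fin n | (i : ℕ) < k} := rfl

include hE hInd in
lemma part1 (k : ℕ) (hk : k ≤ n) {F : Set (TnEdge n)} (hF : M.IsFlat F) (hsp : spine ∈ F)
    (hrk : mRank M F = k + 1) : ∃ g ∈ BnGroup n, ⇑g '' F = FkII n k := by
  classical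
  set S : Set (Fin n) := {i | a i ∈ F} with hSdef
  have hshape : F = pairSet S := F_shape hE hInd hF hsp
  have hS : S.ncard = k := by
    have := mRank_pairSet hInd S
    rw [hshape, this] at hrk
    omega
  have e1 : {x : Fin n // (x : ℕ) < k} ≃ Fin k :=
    { toFun := fun x => ⟨x.1, x.2⟩
      invFun := fun j => ⟨⟨j.1, lt_of_lt_of_le j.2 hk⟩, j.2⟩
      left_inv := fun x => rfl
      right_inv := fun j => rfl }
  have cardT : Fintype.card {x : Fin n // (x : ℕ) < k} = k := by
    rw [Fintype.card_congr e1, Fintype.card_fin]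
  have cardS : Fintype.card {x : Fin n // x ∈ S} = k := by
    rw [← Nat.card_eq_fintype_card, Nat.card_coe_set_eq, hS]
  have e : {x : Fin n // x ∈ S} ≃ {x : Fin n // (x : ℕ) < k} :=
    Fintype.equivOfCardEq (by rw [cardS, cardT])
  set σ : Equiv.Perm (Fin n) := e.extendSubtype with hσ
  have himg : σ '' S = {i : Fin n | (i : ℕ) < k} := by
    apply Set.eq_of_subset_of_subset
    · rintro _ ⟨i, hi, rfl⟩
      exact e.extendSubtype_mem i hi
    · intro j hj
      have : σ (σ.symm j) = j := σ.apply_symm_apply j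
      by_cases hmem : σ.symm j ∈ S
      · exact ⟨σ.symm j, hmem, this⟩
      · exact absurd (this ▸ e.extendSubtype_not_mem _ hmem) (by simpa using hj)
  refine ⟨spikePerm σ, Subgroup.subset_closure (Or.inl ⟨σ, rfl⟩), ?_⟩
  rw [hshape, spikePerm_image_pairSet, himg, FkII_eq_pairSet]


/-! ### Part 2: group theory -/

abbrev C2 := Multiplicative (ZMod 2)

lemma C2.mul_self (c : C2) : c * c = 1 := by revert c; decide

lemma C2.cases (c : C2) : c = 1 ∨ c = Multiplicative.ofAdd 1 := by revert c; decide

def swapAllFun (ε : Fin n → C2) : TnEdge n → TnEdge n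
  | spine => spine
  | a i => if ε i = 1 then a i else b i
  | b i => if ε i = 1 then b i else a i

lemma swapAllFun_comp (ε δ : Fin n → C2) (e : TnEdge n) :
    swapAllFun ε (swapAllFun δ e) = swapAllFun (ε * δ) e := by
  have h1 : (Multiplicative.ofAdd (1 : ZMod 2)) * Multiplicative.ofAdd (1 : ZMod 2) = 1 := by
    decide
  have h2 : (Multiplicative.ofAdd (1 : ZMod 2)) ≠ 1 := by decide
  cases e with
  | spine => rfl
  | a i =>
    rcases C2.cases (ε i) with hε | hε <;> rcases C2.cases (δ i) with hδ | hδ <;>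
      simp [swapAllFun, hε, hδ, h1, h2]
  | b i =>
    rcases C2.cases (ε i) with hε | hε <;> rcases C2.cases (δ i) with hδ | hδ <;>
      simp [swapAllFun, hε, hδ, h1, h2]

lemma swapAllFun_one (e : TnEdge n) : swapAllFun 1 e = e := by
  cases e <;> simp [swapAllFun]

def swapAll (ε : Fin n → C2) : Equiv.Perm (TnEdge n) where
  toFun := swapAllFun ε
  invFun := swapAllFun ε
  left_inv := fun e => by
    rw [swapAllFun_comp]
    have : ε * ε = 1 := funext fun i => C2.mul_self (ε i)
    rw [this, swapAllFun_one]
  right_inv := fun e => by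
    rw [swapAllFun_comp]
    have : ε * ε = 1 := funext fun i => C2.mul_self (ε i)
    rw [this, swapAllFun_one]

lemma swapAll_apply (ε : Fin n → C2) (e : TnEdge n) : swapAll ε e = swapAllFun ε e := rfl

def swapAllHom : (Fin n → C2) →* Equiv.Perm (TnEdge n) where
  toFun := swapAll
  map_one' := Equiv.ext fun e => swapAllFun_one e
  map_mul' := fun ε δ => Equiv.ext fun e => (swapAllFun_comp ε δ e).symm

def spikePermHom : Equiv.Perm (Fin n) →* Equiv.Perm (TnEdge n) where
  toFun := spikePerm
  map_one' := Equiv.ext fun e => by cases e <;> rfl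
  map_mul' := fun σ τ => Equiv.ext fun e => by cases e <;> rfl

lemma conj_swapAll (σ : Equiv.Perm (Fin n)) (ε : Fin n → C2) :
    spikePerm σ * swapAll ε * (spikePerm σ)⁻¹ = swapAll (fun j => ε (σ.symm j)) := by
  rw [mul_inv_eq_iff_eq_mul]
  apply Equiv.ext
  intro e
  rw [Equiv.Perm.mul_apply, Equiv.Perm.mul_apply]
  cases e with
  | spine => rfl
  | a i =>
    rw [swapAll_apply, spikePerm_a, swapAll_apply]
    by_cases h : ε i = 1 <;>
      simp [swapAllFun, h, σ.symm_apply_apply, spikePerm_a, spikePerm_b]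
  | b i =>
    rw [swapAll_apply, spikePerm_b, swapAll_apply]
    by_cases h : ε i = 1 <;>
      simp [swapAllFun, h, σ.symm_apply_apply, spikePerm_a, spikePerm_b]

abbrev Hyp (m : ℕ) :=
  SemidirectProduct (Fin m → C2) (Equiv.Perm (Fin m)) (permAutHom m)

lemma swapAll_mul (ε δ : Fin n → C2) : swapAll (ε * δ) = swapAll ε * swapAll δ :=
  map_mul swapAllHom ε δ

lemma spikePerm_mul (σ τ : Equiv.Perm (Fin n)) :
    spikePerm (σ * τ) = spikePerm σ * spikePerm τ :=
  map_mul spikePermHom σ τ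

lemma permAutHom_apply (σ : Equiv.Perm (Fin n)) (ε : Fin n → C2) :
    permAutHom n σ ε = fun j => ε (σ.symm j) := rfl

def Phi : Hyp n →* Equiv.Perm (TnEdge n) where
  toFun x := swapAll x.left * spikePerm x.right
  map_one' := by
    show (swapAllHom (1 : Fin n → C2)) * (spikePermHom (1 : Equiv.Perm (Fin n))) = 1
    rw [map_one, map_one, one_mul]
  map_mul' x y := by
    simp only [SemidirectProduct.mul_left, SemidirectProduct.mul_right]
    rw [permAutHom_apply, swapAll_mul, spikePerm_mul, ← conj_swapAll x.right y.left]
    group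

lemma Phi_mk (ε : Fin n → C2) (σ : Equiv.Perm (Fin n)) :
    Phi (⟨ε, σ⟩ : Hyp n) = swapAll ε * spikePerm σ := rfl

lemma Phi_mk_apply_a (ε : Fin n → C2) (σ : Equiv.Perm (Fin n)) (i : Fin n) :
    Phi (⟨ε, σ⟩ : Hyp n) (a i)
      = if ε (σ i) = 1 then a (σ i) else b (σ i) := by
  rw [Phi_mk]; rfl

lemma Phi_mk_apply_b (ε : Fin n → C2) (σ : Equiv.Perm (Fin n)) (i : Fin n) :
    Phi (⟨ε, σ⟩ : Hyp n) (b i)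
      = if ε (σ i) = 1 then b (σ i) else a (σ i) := by
  rw [Phi_mk]; rfl

lemma Phi_mk_apply_spine (ε : Fin n → C2) (σ : Equiv.Perm (Fin n)) :
    Phi (⟨ε, σ⟩ : Hyp n) spine = spine := by
  rw [Phi_mk]; rfl

lemma Phi_injective : Function.Injective (Phi (n := n)) := by
  rw [injective_iff_map_eq_one]
  rintro ⟨ε, σ⟩ h
  have key : ∀ i : Fin n, σ i = i ∧ ε (σ i) = 1 := by
    intro i
    have : Phi (⟨ε, σ⟩ : Hyp n) (a i)
        = (1 : Equiv.Perm (TnEdge n)) (a i) := by rw [h]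
    rw [Phi_mk_apply_a] at this
    simp only [Equiv.Perm.one_apply] at this
    by_cases hc : ε (σ i) = 1
    · rw [if_pos hc] at this
      exact ⟨a_injective this, hc⟩
    · rw [if_neg hc] at this
      exact absurd this (by simp)
  apply SemidirectProduct.ext
  · show ε = 1
    funext i
    have := (key i).2
    rw [(key i).1] at this
    exact this
  · show σ = 1
    apply Equiv.ext
    intro i
    exact (key i).1

lemma spikeSwap_eq_swapAll (i : Fin n) :
    spikeSwap i = swapAll (Pi.mulSingle i (Multiplicative.ofAdd (1 : ZMod 2))) := by
  have h2 : (Multiplicative.ofAdd (1 : ZMod 2)) ≠ 1 := by decide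
  apply Equiv.ext
  intro e
  cases e with
  | spine =>
    rw [show (spikeSwap i) spine = spine from
      Equiv.swap_apply_of_ne_of_ne (by simp) (by simp)]
    rfl
  | a j =>
    by_cases h : j = i
    · subst h
      rw [show (spikeSwap j) (a j) = b j from Equiv.swap_apply_left _ _]
      rw [swapAll_apply]
      simp [swapAllFun, h2]
    · rw [show (spikeSwap i) (a j) = a j from
        Equiv.swap_apply_of_ne_of_ne (by simp [h]) (by simp)]
      rw [swapAll_apply]
      simp [swapAllFun, Pi.mulSingle_apply, h]
  | b j =>
    by_cases h : j = i
    · subst h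
      rw [show (spikeSwap j) (b j) = a j from Equiv.swap_apply_right _ _]
      rw [swapAll_apply]
      simp [swapAllFun, h2]
    · rw [show (spikeSwap i) (b j) = b j from
        Equiv.swap_apply_of_ne_of_ne (by simp) (by simp [h])]
      rw [swapAll_apply]
      simp [swapAllFun, Pi.mulSingle_apply, h]

lemma swapAll_single_mem (j : Fin n) (c : C2) : swapAll (Pi.mulSingle j c) ∈ BnGroup n := by
  rcases C2.cases c with h | h
  · have h1 : swapAll (Pi.mulSingle j c) = 1 := by
      apply Equiv.ext
      intro e
      cases e <;> simp [swapAll_apply, swapAllFun, Pi.mulSingle_apply, h]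
    rw [h1]
    exact one_mem _
  · rw [h, ← spikeSwap_eq_swapAll]
    exact Subgroup.subset_closure (Or.inr ⟨j, rfl⟩)

lemma swapAll_mem_aux (s : Finset (Fin n)) :
    ∀ ε : Fin n → C2, (∀ i ∉ s, ε i = 1) → swapAll ε ∈ BnGroup n := by
  induction s using Finset.induction_on with
  | empty =>
    intro ε h
    have : ε = 1 := funext fun i => h i (by simp)
    rw [this, show swapAll (1 : Fin n → C2) = 1 from map_one swapAllHom]
    exact one_mem _
  | @insert j s hj ih =>
    intro ε h
    have hdecomp : ε = Pi.mulSingle j (ε j) * Function.update ε j 1 := by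
      funext i
      by_cases hij : i = j
      · subst hij
        simp [Pi.mulSingle_apply, Function.update_apply]
      · simp [Pi.mulSingle_apply, Function.update_apply, hij]
    rw [hdecomp, show swapAll (Pi.mulSingle j (ε j) * Function.update ε j 1)
        = swapAll (Pi.mulSingle j (ε j)) * swapAll (Function.update ε j 1) from
      map_mul swapAllHom _ _]
    refine mul_mem (swapAll_single_mem j (ε j)) (ih _ ?_)
    intro i hi
    by_cases hij : i = j
    · subst hij; simp [Function.update_apply]
    · rw [Function.update_apply, if_neg hij]
      exact h i (by simp [hij, hi])

lemma swapAll_mem_BnGroup (ε : Fin n → C2) : swapAll ε ∈ BnGroup n :=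
  swapAll_mem_aux Finset.univ ε (by simp)

lemma Phi_range : ∀ x : Hyp n, Phi x ∈ BnGroup n := by
  rintro ⟨ε, σ⟩
  rw [Phi_mk]
  exact mul_mem (swapAll_mem_BnGroup ε) (Subgroup.subset_closure (Or.inl ⟨σ, rfl⟩))

lemma BnGroup_le_Phi_range : BnGroup n ≤ (Phi (n := n)).range := by
  rw [BnGroup, Subgroup.closure_le]
  rintro g (⟨σ, rfl⟩ | ⟨i, rfl⟩)
  · exact ⟨(⟨1, σ⟩ : Hyp n), by
      rw [Phi_mk, show swapAll (1 : Fin n → C2) = 1 from map_one swapAllHom, one_mul]⟩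
  · exact ⟨(⟨Pi.mulSingle i (Multiplicative.ofAdd (1 : ZMod 2)), 1⟩ :
      Hyp n), by
        rw [Phi_mk, spikeSwap_eq_swapAll,
          show spikePerm (1 : Equiv.Perm (Fin n)) = 1 from map_one spikePermHom, mul_one]⟩


section Split

variable {k : ℕ}

/-- splitting `Fin n` into the first `k` and the rest -/
def eqv (hk : k ≤ n) : Fin k ⊕ Fin (n - k) ≃ Fin n :=
  finSumFinEquiv.trans (finCongr (Nat.add_sub_cancel' hk))

variable (hk : k ≤ n)

lemma eqv_inl_val (i : Fin k) : (eqv hk (Sum.inl i) : ℕ) = i := rfl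

lemma eqv_inr_val (j : Fin (n - k)) : (eqv hk (Sum.inr j) : ℕ) = k + j := rfl

lemma eqv_surj (x : Fin n) : ∃ s, eqv hk s = x :=
  ⟨(eqv hk).symm x, (eqv hk).apply_symm_apply x⟩

lemma lt_iff_inl (x : Fin n) : (x : ℕ) < k ↔ ∃ i : Fin k, x = eqv hk (Sum.inl i) := by
  constructor
  · intro hx
    obtain ⟨s, rfl⟩ := eqv_surj hk x
    cases s with
    | inl i => exact ⟨i, rfl⟩
    | inr j => rw [eqv_inr_val] at hx; omega
  · rintro ⟨i, rfl⟩
    rw [eqv_inl_val]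
    exact i.2

def vecJoin (u : Fin k → C2) (v : Fin (n - k) → C2) : Fin n → C2 :=
  fun x => Sum.elim u v ((eqv hk).symm x)

def permJoin (σ1 : Equiv.Perm (Fin k)) (σ2 : Equiv.Perm (Fin (n - k))) :
    Equiv.Perm (Fin n) :=
  ((eqv hk).symm.trans ((Equiv.sumCongr σ1 σ2).trans (eqv hk)))

lemma permJoin_apply (σ1 : Equiv.Perm (Fin k)) (σ2 : Equiv.Perm (Fin (n - k))) (x : Fin n) :
    permJoin hk σ1 σ2 x = eqv hk (Sum.map σ1 σ2 ((eqv hk).symm x)) := rfl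

lemma vecJoin_eqv_inl (u : Fin k → C2) (v : Fin (n - k) → C2) (i : Fin k) :
    vecJoin hk u v (eqv hk (Sum.inl i)) = u i := by
  simp [vecJoin]

lemma vecJoin_eqv_inr (u : Fin k → C2) (v : Fin (n - k) → C2) (j : Fin (n - k)) :
    vecJoin hk u v (eqv hk (Sum.inr j)) = v j := by
  simp [vecJoin]

lemma permJoin_eqv_inl (σ1 : Equiv.Perm (Fin k)) (σ2 : Equiv.Perm (Fin (n - k))) (i : Fin k) :
    permJoin hk σ1 σ2 (eqv hk (Sum.inl i)) = eqv hk (Sum.inl (σ1 i)) := by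
  rw [permJoin_apply, Equiv.symm_apply_apply]
  rfl

lemma permJoin_eqv_inr (σ1 : Equiv.Perm (Fin k)) (σ2 : Equiv.Perm (Fin (n - k)))
    (j : Fin (n - k)) :
    permJoin hk σ1 σ2 (eqv hk (Sum.inr j)) = eqv hk (Sum.inr (σ2 j)) := by
  rw [permJoin_apply, Equiv.symm_apply_apply]
  rfl

lemma permJoin_symm_apply (σ1 : Equiv.Perm (Fin k)) (σ2 : Equiv.Perm (Fin (n - k)))
    (x : Fin n) :
    (permJoin hk σ1 σ2).symm x = permJoin hk σ1.symm σ2.symm x := by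
  apply (permJoin hk σ1 σ2).injective
  rw [Equiv.apply_symm_apply]
  obtain ⟨s, rfl⟩ := eqv_surj hk x
  cases s with
  | inl i => rw [permJoin_eqv_inl, permJoin_eqv_inl, Equiv.apply_symm_apply]
  | inr j => rw [permJoin_eqv_inr, permJoin_eqv_inr, Equiv.apply_symm_apply]

/-- the combination homomorphism `B_k × B_{n-k} → B_n` on the abstract level -/
def Theta0 : Hyp k × Hyp (n - k) →* Hyp n where
  toFun p := ⟨vecJoin hk p.1.left p.2.left, permJoin hk p.1.right p.2.right⟩
  map_one' := by
    refine SemidirectProduct.ext ?_ ?_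
    · show vecJoin hk 1 1 = 1
      funext x
      obtain ⟨s, rfl⟩ := eqv_surj hk x
      cases s with
      | inl i => rw [vecJoin_eqv_inl]; rfl
      | inr j => rw [vecJoin_eqv_inr]; rfl
    · show permJoin hk 1 1 = 1
      apply Equiv.ext
      intro x
      obtain ⟨s, rfl⟩ := eqv_surj hk x
      cases s with
      | inl i => rw [permJoin_eqv_inl]; rfl
      | inr j => rw [permJoin_eqv_inr]; rfl
  map_mul' p q := by
    refine SemidirectProduct.ext ?_ ?_
    · show vecJoin hk (p.1 * q.1).left (p.2 * q.2).left = _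
      simp only [SemidirectProduct.mul_left]
      funext x
      obtain ⟨s, rfl⟩ := eqv_surj hk x
      cases s with
      | inl i =>
        simp only [Pi.mul_apply, permAutHom_apply, permJoin_symm_apply, permJoin_eqv_inl,
          vecJoin_eqv_inl]
      | inr j =>
        simp only [Pi.mul_apply, permAutHom_apply, permJoin_symm_apply, permJoin_eqv_inr,
          vecJoin_eqv_inr]
  -- right component
    · show permJoin hk (p.1.right * q.1.right) (p.2.right * q.2.right)
        = permJoin hk p.1.right p.2.right * permJoin hk q.1.right q.2.right
      apply Equiv.ext
      intro x
      obtain ⟨s, rfl⟩ := eqv_surj hk x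
      rw [Equiv.Perm.mul_apply]
      cases s with
      | inl i =>
        rw [permJoin_eqv_inl, permJoin_eqv_inl, permJoin_eqv_inl]
        rfl
      | inr j =>
        rw [permJoin_eqv_inr, permJoin_eqv_inr, permJoin_eqv_inr]
        rfl


lemma Theta0_injective : Function.Injective (Theta0 (n := n) hk) := by
  rintro ⟨⟨u, σ1⟩, ⟨v, σ2⟩⟩ ⟨⟨u', σ1'⟩, ⟨v', σ2'⟩⟩ h
  have hL : vecJoin hk u v = vecJoin hk u' v' := congrArg SemidirectProduct.left h
  have hR : permJoin hk σ1 σ2 = permJoin hk σ1' σ2' := congrArg SemidirectProduct.right h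
  have hu : u = u' := by
    funext i
    have := congrFun hL (eqv hk (Sum.inl i))
    rwa [vecJoin_eqv_inl, vecJoin_eqv_inl] at this
  have hv : v = v' := by
    funext j
    have := congrFun hL (eqv hk (Sum.inr j))
    rwa [vecJoin_eqv_inr, vecJoin_eqv_inr] at this
  have hσ1 : σ1 = σ1' := by
    apply Equiv.ext
    intro i
    have : permJoin hk σ1 σ2 (eqv hk (Sum.inl i))
        = permJoin hk σ1' σ2' (eqv hk (Sum.inl i)) := by rw [hR]
    rw [permJoin_eqv_inl, permJoin_eqv_inl] at this
    have := (eqv hk).injective this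
    exact Sum.inl_injective this
  have hσ2 : σ2 = σ2' := by
    apply Equiv.ext
    intro j
    have : permJoin hk σ1 σ2 (eqv hk (Sum.inr j))
        = permJoin hk σ1' σ2' (eqv hk (Sum.inr j)) := by rw [hR]
    rw [permJoin_eqv_inr, permJoin_eqv_inr] at this
    have := (eqv hk).injective this
    exact Sum.inr_injective this
  rw [hu, hv, hσ1, hσ2]

/-- image of a pairSet under a `Phi` element -/
lemma Phi_image_pairSet (ε : Fin n → C2) (σ : Equiv.Perm (Fin n)) (S : Set (Fin n)) :
    ⇑(Phi (⟨ε, σ⟩ : Hyp n)) '' pairSet S = pairSet (σ '' S) := by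
  ext y
  constructor
  · rintro ⟨x, hx, rfl⟩
    rcases hx with rfl | ⟨i, hi, rfl | rfl⟩
    · rw [Phi_mk_apply_spine]
      exact Or.inl rfl
    · rw [Phi_mk_apply_a]
      by_cases h : ε (σ i) = 1
      · rw [if_pos h]; exact Or.inr ⟨σ i, ⟨i, hi, rfl⟩, Or.inl rfl⟩
      · rw [if_neg h]; exact Or.inr ⟨σ i, ⟨i, hi, rfl⟩, Or.inr rfl⟩
    · rw [Phi_mk_apply_b]
      by_cases h : ε (σ i) = 1
      · rw [if_pos h]; exact Or.inr ⟨σ i, ⟨i, hi, rfl⟩, Or.inr rfl⟩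
      · rw [if_neg h]; exact Or.inr ⟨σ i, ⟨i, hi, rfl⟩, Or.inl rfl⟩
  · rintro (rfl | ⟨_, ⟨i, hi, rfl⟩, rfl | rfl⟩)
    · exact ⟨spine, Or.inl rfl, Phi_mk_apply_spine ε σ⟩
    · by_cases h : ε (σ i) = 1
      · exact ⟨a i, Or.inr ⟨i, hi, Or.inl rfl⟩, by rw [Phi_mk_apply_a, if_pos h]⟩
      · exact ⟨b i, Or.inr ⟨i, hi, Or.inr rfl⟩, by rw [Phi_mk_apply_b, if_neg h]⟩
    · by_cases h : ε (σ i) = 1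
      · exact ⟨b i, Or.inr ⟨i, hi, Or.inr rfl⟩, by rw [Phi_mk_apply_b, if_pos h]⟩
      · exact ⟨a i, Or.inr ⟨i, hi, Or.inl rfl⟩, by rw [Phi_mk_apply_a, if_neg h]⟩

lemma pairSet_inj {S T : Set (Fin n)} (h : pairSet S = pairSet T) : S = T := by
  ext i
  constructor
  · intro hi
    exact a_mem_pairSet (h ▸ (Or.inr ⟨i, hi, Or.inl rfl⟩ : a i ∈ pairSet S))
  · intro hi
    exact a_mem_pairSet (h ▸ (Or.inr ⟨i, hi, Or.inl rfl⟩ : a i ∈ pairSet T) : a i ∈ pairSet S)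

/-- the distinguished index set -/
def Tset (n k : ℕ) : Set (Fin n) := {i : Fin n | (i : ℕ) < k}

lemma permJoin_image_Tset (σ1 : Equiv.Perm (Fin k)) (σ2 : Equiv.Perm (Fin (n - k))) :
    ⇑(permJoin hk σ1 σ2) '' Tset n k = Tset n k := by
  apply Set.eq_of_subset_of_subset
  · rintro _ ⟨x, hx, rfl⟩
    obtain ⟨i, rfl⟩ := (lt_iff_inl hk x).1 hx
    rw [permJoin_eqv_inl]
    exact (lt_iff_inl hk _).2 ⟨σ1 i, rfl⟩
  · intro x hx
    obtain ⟨i, rfl⟩ := (lt_iff_inl hk x).1 hx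
    exact ⟨eqv hk (Sum.inl (σ1.symm i)), (lt_iff_inl hk _).2 ⟨σ1.symm i, rfl⟩,
      by rw [permJoin_eqv_inl, Equiv.apply_symm_apply]⟩

lemma FkII_eq_pairSet_Tset : FkII n k = pairSet (Tset n k) := rfl

lemma eqv_inl_coe (x : Fin n) (h : (x : ℕ) < k) : eqv hk (Sum.inl ⟨(x : ℕ), h⟩) = x :=
  Fin.ext (eqv_inl_val hk _)

lemma eqv_inr_coe (x : Fin n) (h1 : ¬ (x : ℕ) < k) (h2 : (x : ℕ) - k < n - k) :
    eqv hk (Sum.inr ⟨(x : ℕ) - k, h2⟩) = x := by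
  apply Fin.ext
  rw [eqv_inr_val]
  show k + ((x : ℕ) - k) = (x : ℕ)
  omega

/-- the full homomorphism into the stabilizer -/
noncomputable def theta :
    Hyp k × Hyp (n - k) →* MulAction.stabilizer (BnGroup n) (FkII n k) :=
  MonoidHom.codRestrict
    (MonoidHom.codRestrict (Phi.comp (Theta0 hk)) (BnGroup n) (fun x => Phi_range _))
    (MulAction.stabilizer (BnGroup n) (FkII n k))
    (by
      rintro ⟨⟨u, σ1⟩, ⟨v, σ2⟩⟩
      rw [MulAction.mem_stabilizer_iff]
      show ⇑(Phi (Theta0 hk (⟨u, σ1⟩, ⟨v, σ2⟩))) '' (FkII n k) = FkII n k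
      rw [FkII_eq_pairSet_Tset]
      rw [show Theta0 hk (⟨u, σ1⟩, ⟨v, σ2⟩)
          = (⟨vecJoin hk u v, permJoin hk σ1 σ2⟩ : Hyp n) from rfl]
      rw [Phi_image_pairSet, permJoin_image_Tset])

lemma theta_injective : Function.Injective (theta (n := n) hk) := by
  intro x y h
  have : Phi (Theta0 hk x) = Phi (Theta0 hk y) :=
    congrArg (fun z => ((z : MulAction.stabilizer (BnGroup n) (FkII n k)) :
      Equiv.Perm (TnEdge n))) h
  exact Theta0_injective hk (Phi_injective this)

lemma theta_surjective : Function.Surjective (theta (n := n) hk) := by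
  rintro ⟨⟨g, hgB⟩, hstab⟩
  obtain ⟨x, hx⟩ := BnGroup_le_Phi_range hgB
  obtain ⟨ε, σ⟩ := x
  have himg : ⇑(Phi (⟨ε, σ⟩ : Hyp n)) '' (FkII n k) = FkII n k := by
    rw [hx]
    exact MulAction.mem_stabilizer_iff.1 hstab
  have hT : σ '' Tset n k = Tset n k := by
    apply pairSet_inj
    rw [← Phi_image_pairSet ε σ, ← FkII_eq_pairSet_Tset, himg, FkII_eq_pairSet_Tset]
  have hfwd : ∀ x : Fin n, (x : ℕ) < k → ((σ x : Fin n) : ℕ) < k := by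
    intro x hxk
    have hmem : σ x ∈ ⇑σ '' Tset n k := ⟨x, hxk, rfl⟩
    rw [hT] at hmem
    exact hmem
  have hbwd : ∀ x : Fin n, (x : ℕ) < k → ((σ.symm x : Fin n) : ℕ) < k := by
    intro x hxk
    have hmem : x ∈ ⇑σ '' Tset n k := by rw [hT]; exact hxk
    obtain ⟨z, hz, hzx⟩ := hmem
    rw [← hzx, Equiv.symm_apply_apply]
    exact hz
  have hfwd' : ∀ x : Fin n, ¬ (x : ℕ) < k → ¬ ((σ x : Fin n) : ℕ) < k := by
    intro x hxk hcon
    exact hxk (by simpa using hbwd (σ x) hcon)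
  -- build the small permutations
  have hne : ∀ x : Fin n, ¬ (x : ℕ) < k → (x : ℕ) - k < n - k := by
    intro x h
    have := x.2
    omega
  set f1 : Fin k → Fin k :=
    fun i => ⟨(σ (eqv hk (Sum.inl i)) : ℕ), hfwd _ (by rw [eqv_inl_val]; exact i.2)⟩
    with hf1
  have key1 : ∀ i : Fin k, eqv hk (Sum.inl (f1 i)) = σ (eqv hk (Sum.inl i)) :=
    fun i => eqv_inl_coe hk _ _
  have hinj1 : Function.Injective f1 := by
    intro i j hij
    have : σ (eqv hk (Sum.inl i)) = σ (eqv hk (Sum.inl j)) := by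
      rw [← key1, ← key1, hij]
    have := σ.injective this
    exact Sum.inl_injective ((eqv hk).injective this)
  have hsurj1 : Function.Surjective f1 := by
    intro m
    have hx : ((σ.symm (eqv hk (Sum.inl m)) : Fin n) : ℕ) < k :=
      hbwd _ (by rw [eqv_inl_val]; exact m.2)
    refine ⟨⟨_, hx⟩, ?_⟩
    have h1 : eqv hk (Sum.inl (f1 ⟨_, hx⟩)) = σ (eqv hk (Sum.inl ⟨_, hx⟩)) := key1 _
    have h2 : eqv hk (Sum.inl (⟨_, hx⟩ : Fin k)) = σ.symm (eqv hk (Sum.inl m)) :=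
      eqv_inl_coe hk _ hx
    rw [h2, Equiv.apply_symm_apply] at h1
    exact Sum.inl_injective ((eqv hk).injective h1)
  set σ1 : Equiv.Perm (Fin k) := Equiv.ofBijective f1 ⟨hinj1, hsurj1⟩ with hσ1
  set f2 : Fin (n - k) → Fin (n - k) :=
    fun j => ⟨(σ (eqv hk (Sum.inr j)) : ℕ) - k,
      hne _ (hfwd' _ (by rw [eqv_inr_val]; omega))⟩ with hf2
  have key2 : ∀ j : Fin (n - k), eqv hk (Sum.inr (f2 j)) = σ (eqv hk (Sum.inr j)) :=
    fun j => eqv_inr_coe hk _ (hfwd' _ (by rw [eqv_inr_val]; omega)) _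
  have hinj2 : Function.Injective f2 := by
    intro i j hij
    have : σ (eqv hk (Sum.inr i)) = σ (eqv hk (Sum.inr j)) := by
      rw [← key2, ← key2, hij]
    have := σ.injective this
    exact Sum.inr_injective ((eqv hk).injective this)
  have hsurj2 : Function.Surjective f2 := by
    intro m
    have hx : ¬ ((σ.symm (eqv hk (Sum.inr m)) : Fin n) : ℕ) < k := by
      intro hcon
      have := hfwd _ hcon
      rw [Equiv.apply_symm_apply, eqv_inr_val] at this
      omega
    refine ⟨⟨_, hne _ hx⟩, ?_⟩
    have h1 : eqv hk (Sum.inr (f2 ⟨_, hne _ hx⟩)) = σ (eqv hk (Sum.inr ⟨_, hne _ hx⟩)) :=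
      key2 _
    have h2 : eqv hk (Sum.inr (⟨_, hne _ hx⟩ : Fin (n - k)))
        = σ.symm (eqv hk (Sum.inr m)) := eqv_inr_coe hk _ hx _
    rw [h2, Equiv.apply_symm_apply] at h1
    exact Sum.inr_injective ((eqv hk).injective h1)
  set σ2 : Equiv.Perm (Fin (n - k)) := Equiv.ofBijective f2 ⟨hinj2, hsurj2⟩ with hσ2
  set u : Fin k → C2 := fun i => ε (eqv hk (Sum.inl i)) with hu
  set v : Fin (n - k) → C2 := fun j => ε (eqv hk (Sum.inr j)) with hv
  have hTheta : Theta0 hk (⟨u, σ1⟩, ⟨v, σ2⟩) = (⟨ε, σ⟩ : Hyp n) := by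
    refine SemidirectProduct.ext ?_ ?_
    · show vecJoin hk u v = ε
      funext x
      obtain ⟨s, rfl⟩ := eqv_surj hk x
      cases s with
      | inl i => rw [vecJoin_eqv_inl]
      | inr j => rw [vecJoin_eqv_inr]
    · show permJoin hk σ1 σ2 = σ
      apply Equiv.ext
      intro x
      obtain ⟨s, rfl⟩ := eqv_surj hk x
      cases s with
      | inl i => rw [permJoin_eqv_inl]; exact key1 i
      | inr j => rw [permJoin_eqv_inr]; exact key2 j
  refine ⟨(⟨⟨u, σ1⟩, ⟨v, σ2⟩⟩ : Hyp k × Hyp (n - k)), ?_⟩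
  apply Subtype.ext
  apply Subtype.ext
  show Phi (Theta0 hk (⟨u, σ1⟩, ⟨v, σ2⟩)) = g
  rw [hTheta, hx]

end Split

end Thag

theorem thagomizer_typeII_orbit_and_stabilizer (n k : ℕ) (hk : k ≤ n)
    (M : Matroid (TnEdge n)) (hE : M.E = Set.univ)
    (hInd : ∀ S, M.Indep S ↔ TnIndep n S)
    (F : Set (TnEdge n)) (hF : M.IsFlat F) (hsp : spine ∈ F)
    (hrk : mRank M F = k + 1) :
    (∃ g ∈ BnGroup n, ⇑g '' F = FkII n k) ∧
    Nonempty (MulAction.stabilizer (BnGroup n) (FkII n k) ≃*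
      hyperoctahedral k × hyperoctahedral (n - k)) := by
  constructor
  · exact Thag.part1 hE hInd k hk hF hsp hrk
  · exact ⟨(MulEquiv.ofBijective (Thag.theta hk)
      ⟨Thag.theta_injective hk, Thag.theta_surjective hk⟩).symm⟩
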